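/- For integers n ≥ 0 and m ≥ 0, the integral ∫₀^π sin^{2n+1}(x)·cos(2mx) dx equals (−1)^{n+1}·2^{n+1}·n!·(2n+1)!! / ∏_{k=0}^{n}(4m² − (2k+1)²); as a consequence, the limit as M → ∞ of the evenised odd-order (p = 2n+1) forward-difference stencil coefficient ⁽ᵖ⁾d_m = (2ᵖ/M)·Σ_{k=0}^{M-1} sin^p(πk/M)·cos(2πmk/M) equals (2ᵖ/π) times this integral, and its sign is (−1)^m for m ≤ n and (−1)^{n+1} for m > n. In particular for p = 1 the limiting stencil −(2/π)·2/(4m²−1) is positive only at m = 0 (a Mexican-hat profile). -/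

import Mathlib

open Filter Topology Real intervalIntegral MeasureTheory


lemma riemann_sum_tendsto (f : ℝ → ℝ) (hf : Continuous f) :
    Tendsto (fun M : ℕ => (∑ k ∈ Finset.range M, f (k / M)) / M) atTop
      (𝓝 (∫ x in (0:ℝ)..1, f x)) := by
  rw [Metric.tendsto_atTop]
  intro ε hε
  have hucont := (isCompact_Icc : IsCompact (Set.Icc (0:ℝ) 1)).uniformContinuousOn_of_continuous
    hf.continuousOn
  rw [Metric.uniformContinuousOn_iff] at hucont
  obtain ⟨δ, hδ, hδ'⟩ := hucont (ε/2) (by linarith)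
  obtain ⟨N0, hN0⟩ := exists_nat_gt δ⁻¹
  refine ⟨N0 + 1, fun M hM => ?_⟩
  have hM1 : 1 ≤ M := le_trans (Nat.le_add_left 1 N0) hM
  have hMpos : (0:ℝ) < M := by exact_mod_cast hM1
  have hinvM : (M:ℝ)⁻¹ < δ := by
    have h1 : δ⁻¹ < (M:ℝ) := lt_of_lt_of_le hN0 (Nat.cast_le.mpr (by omega))
    have := inv_strictAnti₀ (inv_pos.mpr hδ) h1
    rwa [inv_inv] at this
  have hsplit : (∫ x in (0:ℝ)..1, f x)
      = ∑ k ∈ Finset.range M, ∫ x in ((k:ℝ)/M)..((k+1:ℕ)/M), f x := by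
    have h := intervalIntegral.sum_integral_adjacent_intervals
      (a := fun k : ℕ => (k:ℝ)/M) (n := M) (f := f) (μ := MeasureTheory.volume)
      (fun k _ => hf.intervalIntegrable _ _)
    simp only [Nat.cast_zero, zero_div] at h
    rw [h, div_self hMpos.ne']
  have hconst : (∑ k ∈ Finset.range M, f (k / M)) / M
      = ∑ k ∈ Finset.range M, ∫ _ in ((k:ℝ)/M)..((k+1:ℕ)/M), f ((k:ℝ)/M) := by
    rw [Finset.sum_div]
    congr 1; ext k
    rw [intervalIntegral.integral_const, smul_eq_mul]
    push_cast
    field_simp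
    ring
  rw [dist_eq_norm, hconst, hsplit, ← Finset.sum_sub_distrib]
  have hbound : ∀ k ∈ Finset.range M,
      ‖(∫ _ in ((k:ℝ)/M)..((k+1:ℕ)/M), f ((k:ℝ)/M)) - ∫ x in ((k:ℝ)/M)..((k+1:ℕ)/M), f x‖
        ≤ (ε/2) * (M:ℝ)⁻¹ := by
    intro k hk
    rw [Finset.mem_range] at hk
    have hk1 : ((k:ℝ)+1) ≤ M := by exact_mod_cast hk
    have hkM : (0:ℝ) ≤ (k:ℝ)/M := by positivity
    have hkm1 : ((k:ℝ)/M) ≤ 1 := by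
      rw [div_le_one hMpos]; linarith
    rw [← intervalIntegral.integral_sub intervalIntegrable_const (hf.intervalIntegrable _ _)]
    have := intervalIntegral.norm_integral_le_of_norm_le_const
      (a := (k:ℝ)/M) (b := ((k+1:ℕ):ℝ)/M) (C := ε/2)
      (f := fun x => f ((k:ℝ)/M) - f x) ?_
    · calc ‖∫ x in ((k:ℝ)/M)..((k+1:ℕ)/M), (f ((k:ℝ)/M) - f x)‖
          ≤ (ε/2) * |((k+1:ℕ):ℝ)/M - (k:ℝ)/M| := this
        _ = (ε/2) * (M:ℝ)⁻¹ := by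
            congr 1
            push_cast
            rw [div_sub_div_same, add_sub_cancel_left, abs_of_nonneg (by positivity),
              one_div]
    · intro x hx
      rw [Set.uIoc_of_le (by push_cast; gcongr <;> linarith)] at hx
      obtain ⟨hx1, hx2⟩ := hx
      have hx2' : x ≤ ((k:ℝ)+1)/M := by push_cast at hx2 ⊢; linarith
      have hxIcc : x ∈ Set.Icc (0:ℝ) 1 := by
        constructor
        · linarith
        · calc x ≤ ((k:ℝ)+1)/M := hx2'
            _ ≤ 1 := by rw [div_le_one hMpos]; linarith
      have hdist : dist ((k:ℝ)/M) x < δ := by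
        rw [Real.dist_eq, abs_sub_comm, abs_of_nonneg (by linarith)]
        have : x - (k:ℝ)/M ≤ (M:ℝ)⁻¹ := by
          have : ((k:ℝ)+1)/M - (k:ℝ)/M = (M:ℝ)⁻¹ := by field_simp; ring
          linarith
        linarith
      have := hδ' _ ⟨hkM, hkm1⟩ _ hxIcc hdist
      rw [Real.dist_eq] at this
      exact le_of_lt this
  calc ‖∑ k ∈ Finset.range M,
        ((∫ _ in ((k:ℝ)/M)..((k+1:ℕ)/M), f ((k:ℝ)/M)) - ∫ x in ((k:ℝ)/M)..((k+1:ℕ)/M), f x)‖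
      ≤ ∑ k ∈ Finset.range M, (ε/2) * (M:ℝ)⁻¹ :=
        norm_sum_le_of_le _ hbound
    _ = (ε/2) := by
        rw [Finset.sum_const, Finset.card_range, nsmul_eq_mul]
        field_simp
    _ < ε := by linarith


lemma sin_pow_cos_rec (q : ℕ) (a : ℝ) :
    ((q+2:ℝ)^2 - a^2) * ∫ x in (0:ℝ)..π, Real.sin x ^ (q+2) * Real.cos (a*x)
      = (q+2:ℝ)*(q+1) * ∫ x in (0:ℝ)..π, Real.sin x ^ q * Real.cos (a*x) := by
  have hsinax : ∀ x : ℝ, HasDerivAt (fun y => Real.sin (a*y)) (Real.cos (a*x) * a) x := by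
    intro x
    have := (Real.hasDerivAt_sin (a*x)).comp x ((hasDerivAt_id x).const_mul a)
    simp only [mul_one] at this; exact this
  have hcosax : ∀ x : ℝ, HasDerivAt (fun y => Real.cos (a*y)) (-Real.sin (a*x) * a) x := by
    intro x
    have := (Real.hasDerivAt_cos (a*x)).comp x ((hasDerivAt_id x).const_mul a)
    simp only [mul_one] at this; exact this
  -- first identity: d/dx (sin^[q+2] x * sin (a x))
  have hA : ∫ x in (0:ℝ)..π,
      ((q+2:ℝ) * (Real.sin x ^ (q+1) * Real.cos x * Real.sin (a*x))
        + a * (Real.sin x ^ (q+2) * Real.cos (a*x))) = 0 := by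
    have hF : ∀ x ∈ Set.uIcc (0:ℝ) π, HasDerivAt (fun y => Real.sin y ^ (q+2) * Real.sin (a*y))
        ((q+2:ℝ) * (Real.sin x ^ (q+1) * Real.cos x * Real.sin (a*x))
          + a * (Real.sin x ^ (q+2) * Real.cos (a*x))) x := by
      intro x _
      have h1 : HasDerivAt (fun y => Real.sin y ^ (q+2))
          ((q+2:ℕ) * Real.sin x ^ (q+1) * Real.cos x) x := by
        simpa using (Real.hasDerivAt_sin x).fun_pow (q+2)
      have := h1.mul (hsinax x)
      refine this.congr_deriv ?_
      push_cast
      ring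
    rw [intervalIntegral.integral_eq_sub_of_hasDerivAt hF (Continuous.intervalIntegrable (by fun_prop) _ _)]
    simp
  -- second identity: d/dx (sin^[q+1] x * cos x * cos (a x))
  have hB : ∫ x in (0:ℝ)..π,
      ((q+1:ℝ) * (Real.sin x ^ q * Real.cos x ^ 2 * Real.cos (a*x))
        - Real.sin x ^ (q+2) * Real.cos (a*x)
        - a * (Real.sin x ^ (q+1) * Real.cos x * Real.sin (a*x))) = 0 := by
    have hF : ∀ x ∈ Set.uIcc (0:ℝ) π,
        HasDerivAt (fun y => Real.sin y ^ (q+1) * Real.cos y * Real.cos (a*y))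
        ((q+1:ℝ) * (Real.sin x ^ q * Real.cos x ^ 2 * Real.cos (a*x))
          - Real.sin x ^ (q+2) * Real.cos (a*x)
          - a * (Real.sin x ^ (q+1) * Real.cos x * Real.sin (a*x))) x := by
      intro x _
      have h1 : HasDerivAt (fun y => Real.sin y ^ (q+1))
          ((q+1:ℕ) * Real.sin x ^ q * Real.cos x) x := by
        simpa using (Real.hasDerivAt_sin x).fun_pow (q+1)
      have := (h1.mul (Real.hasDerivAt_cos x)).mul (hcosax x)
      refine this.congr_deriv ?_
      simp only [Pi.mul_apply]
      push_cast
      ring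
    rw [intervalIntegral.integral_eq_sub_of_hasDerivAt hF (Continuous.intervalIntegrable (by fun_prop) _ _)]
    simp
  -- split the integrals
  set J := ∫ x in (0:ℝ)..π, Real.sin x ^ (q+2) * Real.cos (a*x) with hJ
  set K := ∫ x in (0:ℝ)..π, Real.sin x ^ (q+1) * Real.cos x * Real.sin (a*x) with hK
  set I := ∫ x in (0:ℝ)..π, Real.sin x ^ q * Real.cos (a*x) with hI
  have hJi : IntervalIntegrable (fun x => Real.sin x ^ (q+2) * Real.cos (a*x)) volume 0 π := by
    apply Continuous.intervalIntegrable; fun_prop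
  have hKi : IntervalIntegrable (fun x => Real.sin x ^ (q+1) * Real.cos x * Real.sin (a*x)) volume 0 π := by
    apply Continuous.intervalIntegrable; fun_prop
  have hLi : IntervalIntegrable (fun x => Real.sin x ^ q * Real.cos x ^ 2 * Real.cos (a*x)) volume 0 π := by
    apply Continuous.intervalIntegrable; fun_prop
  have hIi : IntervalIntegrable (fun x => Real.sin x ^ q * Real.cos (a*x)) volume 0 π := by
    apply Continuous.intervalIntegrable; fun_prop
  have hA' : (q+2:ℝ) * K + a * J = 0 := by
    rw [← intervalIntegral.integral_const_mul, ← intervalIntegral.integral_const_mul,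
      ← intervalIntegral.integral_add (hKi.const_mul _) (hJi.const_mul _)] at *
    exact hA
  have hL : (∫ x in (0:ℝ)..π, Real.sin x ^ q * Real.cos x ^ 2 * Real.cos (a*x)) = I - J := by
    rw [hI, hJ, ← intervalIntegral.integral_sub hIi hJi]
    congr 1
    ext x
    have : Real.cos x ^ 2 = 1 - Real.sin x ^ 2 := by
      rw [Real.cos_sq']
    rw [this]
    ring
  have hB' : (q+1:ℝ) * (I - J) - J - a * K = 0 := by
    rw [← hL]
    rw [← intervalIntegral.integral_const_mul, ← intervalIntegral.integral_const_mul,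
      ← intervalIntegral.integral_sub (hLi.const_mul _) hJi,
      ← intervalIntegral.integral_sub ((hLi.const_mul _).sub hJi) (hKi.const_mul _)]
    exact hB
  linear_combination (-(q:ℝ)-2)*hB' - a*hA'


lemma four_m_sq_ne (m k : ℕ) : 4*(m:ℝ)^2 - (2*(k:ℝ)+1)^2 ≠ 0 := by
  intro h
  have h2 : ((2*m)^2 : ℝ) = ((2*k+1)^2 : ℝ) := by push_cast; nlinarith
  have h3 : ((2*m)^2 : ℕ) = ((2*k+1)^2 : ℕ) := by exact_mod_cast h2
  have h4 : 2*m = 2*k+1 := Nat.pow_left_injective (by norm_num) h3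
  omega

lemma integral_sin_cos_base (m : ℕ) :
    (∫ x in (0:ℝ)..π, Real.sin x * Real.cos (2*(m:ℝ)*x)) = 2 / (1 - 4*(m:ℝ)^2) := by
  set a : ℝ := 2*(m:ℝ) with ha
  have h1 : (1:ℝ) + a ≠ 0 := by positivity
  have h2 : (1:ℝ) - a ≠ 0 := fun h =>
    four_m_sq_ne m 0 (by push_cast [ha] at h ⊢; nlinarith)
  have hF : ∀ x ∈ Set.uIcc (0:ℝ) π,
      HasDerivAt (fun y => -(Real.cos ((1+a)*y)/(1+a) + Real.cos ((1-a)*y)/(1-a))/2)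
        (Real.sin x * Real.cos (a*x)) x := by
    intro x _
    have hc : ∀ c : ℝ, HasDerivAt (fun y => Real.cos (c*y)) (-Real.sin (c*x) * c) x := by
      intro c
      have := (Real.hasDerivAt_cos (c*x)).comp x ((hasDerivAt_id x).const_mul c)
      simp only [mul_one] at this; exact this
    have := (((hc (1+a)).div_const (1+a)).add ((hc (1-a)).div_const (1-a))).neg.div_const 2
    refine this.congr_deriv ?_
    have e1 : (1+a)*x = x + a*x := by ring
    have e2 : (1-a)*x = x - a*x := by ring
    rw [e1, e2, Real.sin_add, Real.sin_sub]
    field_simp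
    ring
  rw [intervalIntegral.integral_eq_sub_of_hasDerivAt hF
    (Continuous.intervalIntegrable (by fun_prop) _ _)]
  have hcos1 : Real.cos ((1+a)*π) = -1 := by
    have : (1+a)*π = π + (m:ℤ)*(2*π) := by push_cast [ha]; ring
    rw [this, Real.cos_add_int_mul_two_pi, Real.cos_pi]
  have hcos2 : Real.cos ((1-a)*π) = -1 := by
    have e : (1-a)*π = π + ((-(m:ℤ) : ℤ) : ℝ)*(2*π) := by rw [ha]; push_cast; ring
    rw [e, Real.cos_add_int_mul_two_pi, Real.cos_pi]
  rw [hcos1, hcos2]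
  simp only [mul_zero, Real.cos_zero]
  have h3 : 1 - 4*(m:ℝ)^2 ≠ 0 := by
    intro h
    exact four_m_sq_ne m 0 (by push_cast; linarith)
  field_simp [ha]
  ring

lemma prod_ne (m n : ℕ) :
    (∏ k ∈ Finset.range (n + 1), (4 * (m : ℝ) ^ 2 - (2 * (k : ℝ) + 1) ^ 2)) ≠ 0 :=
  Finset.prod_ne_zero_iff.mpr fun k _ => four_m_sq_ne m k

lemma integral_closed (m : ℕ) (n : ℕ) :
    (∫ x in (0:ℝ)..π, Real.sin x ^ (2 * n + 1) * Real.cos (2 * (m:ℝ) * x))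
      = ((-1 : ℝ) ^ (n + 1) * 2 ^ (n + 1) * (n.factorial : ℝ) * ((2 * n + 1).doubleFactorial : ℝ))
        / (∏ k ∈ Finset.range (n + 1), (4 * (m : ℝ) ^ 2 - (2 * (k : ℝ) + 1) ^ 2)) := by
  induction n with
  | zero =>
      simp only [Nat.mul_zero, Nat.zero_add, pow_one]
      rw [show ((2*0+1 : ℕ).doubleFactorial : ℝ) = 1 from by norm_num [Nat.doubleFactorial]]
      have h := integral_sin_cos_base m
      have h1 := four_m_sq_ne m 0
      rw [Finset.prod_range_one]
      norm_num at h1 ⊢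
      rw [h]
      rw [div_eq_div_iff (by intro hh; apply h1; linarith) (by intro hh; apply h1; linarith)]
      ring
  | succ n ih =>
      have hrec := sin_pow_cos_rec (2*n+1) (2*(m:ℝ))
      have hexp : 2*n+1+2 = 2*(n+1)+1 := by ring
      rw [hexp] at hrec
      have hD := four_m_sq_ne m (n+1)
      have hP := prod_ne m n
      have hPS := prod_ne m (n+1)
      rw [ih] at hrec
      rw [eq_div_iff hPS]
      rw [Finset.prod_range_succ]
      have hdf : ((2*(n+1)+1 : ℕ).doubleFactorial : ℝ)
          = (2*(n:ℝ)+3) * ((2*n+1 : ℕ).doubleFactorial : ℝ) := by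
        rw [show 2*(n+1)+1 = (2*n+1)+2 from by ring, Nat.doubleFactorial_add_two]
        push_cast
        ring
      rw [hdf, Nat.factorial_succ]
      push_cast at hrec hD ⊢
      push_cast at hP
      rw [mul_div_assoc', eq_div_iff hP] at hrec
      -- hrec : ((2n+3)^2 - (2m)^2) * I_{n+1} * P = (2n+3)(2n+2) * C_n
      linear_combination (-1 : ℝ) * hrec


lemma sign_helper (j : ℕ) (r : ℝ) (h : 0 < (-1:ℝ)^j * r) : Real.sign r = (-1)^j := by
  rcases Nat.even_or_odd j with hj | hj
  · rw [hj.neg_one_pow] at h ⊢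
    rw [one_mul] at h
    exact Real.sign_of_pos h
  · rw [hj.neg_one_pow] at h ⊢
    exact Real.sign_of_neg (by linarith)

lemma pos_aux (T E P : ℝ) (b : ℕ) (hT : 0 < T) (hE : 0 < E) (hP : 0 < (-1:ℝ)^b * P) :
    0 < (-1:ℝ)^b * (T * (E / P)) := by
  rcases Nat.even_or_odd b with h | h
  · rw [h.neg_one_pow, one_mul] at hP ⊢
    exact mul_pos hT (div_pos hE hP)
  · rw [h.neg_one_pow, neg_one_mul, neg_pos] at hP ⊢
    have hPneg : P < 0 := by linarith
    exact mul_neg_of_pos_of_neg hT (div_neg_of_pos_of_neg hE hPneg)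

lemma prod_sign_le (m n : ℕ) (hmn : m ≤ n) :
    0 < (-1:ℝ)^(n+1-m) * ∏ k ∈ Finset.range (n + 1), (4 * (m : ℝ) ^ 2 - (2 * (k : ℝ) + 1) ^ 2) := by
  set b := n + 1 - m with hb
  have hnb : n + 1 = m + b := by omega
  rw [hnb, Finset.prod_range_add]
  have hA : 0 < ∏ k ∈ Finset.range m, (4 * (m : ℝ) ^ 2 - (2 * (k : ℝ) + 1) ^ 2) := by
    apply Finset.prod_pos
    intro i hi
    rw [Finset.mem_range] at hi
    have : (i:ℝ) + 1 ≤ m := by exact_mod_cast hi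
    nlinarith
  have hB : 0 < (-1:ℝ)^b * ∏ k ∈ Finset.range b, (4 * (m : ℝ) ^ 2 - (2 * ((m + k : ℕ) : ℝ) + 1) ^ 2) := by
    have key : ∏ k ∈ Finset.range b, -(4 * (m : ℝ) ^ 2 - (2 * ((m + k : ℕ) : ℝ) + 1) ^ 2)
        = (-1:ℝ)^b * ∏ k ∈ Finset.range b, (4 * (m : ℝ) ^ 2 - (2 * ((m + k : ℕ) : ℝ) + 1) ^ 2) := by
      have hc : (-1:ℝ)^b = ∏ _k ∈ Finset.range b, (-1:ℝ) := by
        rw [Finset.prod_const, Finset.card_range]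
      rw [hc, ← Finset.prod_mul_distrib]
      congr 1; ext k; ring
    rw [← key]
    apply Finset.prod_pos
    intro i _
    have : (m:ℝ) ≤ ((m + i : ℕ) : ℝ) := by exact_mod_cast Nat.le_add_right m i
    have h0 : (0:ℝ) ≤ m := Nat.cast_nonneg m
    nlinarith
  calc (0:ℝ) < ((∏ k ∈ Finset.range m, (4 * (m : ℝ) ^ 2 - (2 * (k : ℝ) + 1) ^ 2)))
        * ((-1:ℝ)^b * ∏ k ∈ Finset.range b, (4 * (m : ℝ) ^ 2 - (2 * ((m + k : ℕ) : ℝ) + 1) ^ 2)) :=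
        mul_pos hA hB
    _ = (-1:ℝ)^b * ((∏ k ∈ Finset.range m, (4 * (m : ℝ) ^ 2 - (2 * (k : ℝ) + 1) ^ 2))
        * ∏ k ∈ Finset.range b, (4 * (m : ℝ) ^ 2 - (2 * ((m + k : ℕ) : ℝ) + 1) ^ 2)) := by ring

lemma prod_pos_gt (m n : ℕ) (hmn : n < m) :
    0 < ∏ k ∈ Finset.range (n + 1), (4 * (m : ℝ) ^ 2 - (2 * (k : ℝ) + 1) ^ 2) := by
  apply Finset.prod_pos
  intro i hi
  rw [Finset.mem_range] at hi
  have : (i:ℝ) + 1 ≤ m := by exact_mod_cast by omega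
  nlinarith


/-- The integral `∫₀^π sin^{2n+1}x·cos(2mx) dx` in closed form; consequently the
evenised odd-order (`p = 2n+1`) forward-difference stencil coefficients
`⁽ᵖ⁾d_m = (2ᵖ/M)·Σ_{k<M} sinᵖ(πk/M)cos(2πmk/M)` converge as `M → ∞` to `(2ᵖ/π)` times
this integral, whose sign is `(−1)^m` for `m ≤ n` and `(−1)^{n+1}` for `m > n`; in
particular for `p = 1` the limiting stencil `−(2/π)·2/(4m²−1)` is positive only at
`m = 0` (a Mexican hat). -/
theorem evenised_fwdDiff_limit (n m : ℕ) :
    ((∫ x in (0:ℝ)..Real.pi, Real.sin x ^ (2 * n + 1) * Real.cos (2 * m * x))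
      = ((-1 : ℝ) ^ (n + 1) * 2 ^ (n + 1) * (n.factorial : ℝ) * ((2 * n + 1).doubleFactorial : ℝ))
        / (∏ k ∈ Finset.range (n + 1), (4 * (m : ℝ) ^ 2 - (2 * (k : ℝ) + 1) ^ 2)))
    ∧ Tendsto (fun M : ℕ =>
        (2 ^ (2 * n + 1) / (M : ℝ)) *
          ∑ k ∈ Finset.range M,
            Real.sin (Real.pi * k / M) ^ (2 * n + 1) * Real.cos (2 * Real.pi * m * k / M))
        atTop
        (nhds ((2 ^ (2 * n + 1) / Real.pi) *
          ∫ x in (0:ℝ)..Real.pi, Real.sin x ^ (2 * n + 1) * Real.cos (2 * m * x)))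
    ∧ (m ≤ n →
        Real.sign ((2 ^ (2 * n + 1) / Real.pi) *
            ∫ x in (0:ℝ)..Real.pi, Real.sin x ^ (2 * n + 1) * Real.cos (2 * m * x))
          = (-1 : ℝ) ^ m)
    ∧ (n < m →
        Real.sign ((2 ^ (2 * n + 1) / Real.pi) *
            ∫ x in (0:ℝ)..Real.pi, Real.sin x ^ (2 * n + 1) * Real.cos (2 * m * x))
          = (-1 : ℝ) ^ (n + 1))
    ∧ (n = 0 →
        (0 < -(2 / Real.pi) * (2 / (4 * (m : ℝ) ^ 2 - 1)) ↔ m = 0)) := by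
  have h1 := integral_closed m n
  have hE : 0 < (2:ℝ)^(n+1) * (n.factorial:ℝ) * ((2*n+1).doubleFactorial:ℝ) :=
    mul_pos (mul_pos (by positivity) (by exact_mod_cast n.factorial_pos))
      (by exact_mod_cast (2*n+1).doubleFactorial_pos)
  have hT : (0:ℝ) < 2 ^ (2*n+1) / Real.pi := by positivity
  refine ⟨h1, ?_, ?_, ?_, ?_⟩
  · -- the Riemann sum limit
    have hf : Continuous (fun t : ℝ =>
        Real.sin (Real.pi * t) ^ (2*n+1) * Real.cos (2*Real.pi*(m:ℝ)*t)) := by fun_prop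
    have h2 := (riemann_sum_tendsto _ hf).const_mul ((2:ℝ)^(2*n+1))
    have hfun : (fun M : ℕ =>
        (2 ^ (2 * n + 1) / (M : ℝ)) *
          ∑ k ∈ Finset.range M,
            Real.sin (Real.pi * k / M) ^ (2 * n + 1) * Real.cos (2 * Real.pi * m * k / M))
        = fun M : ℕ => (2:ℝ)^(2*n+1) *
            ((∑ k ∈ Finset.range M,
              Real.sin (Real.pi * ((k:ℝ)/M)) ^ (2*n+1) * Real.cos (2*Real.pi*(m:ℝ)*((k:ℝ)/M))) / M) := by
      funext M
      rw [div_mul_eq_mul_div, mul_div_assoc]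
      congr 1
      congr 1
      apply Finset.sum_congr rfl
      intro k _
      rw [mul_div_assoc Real.pi, mul_div_assoc (2*Real.pi*(m:ℝ))]
    have hcos : ∀ t : ℝ, Real.cos (2*Real.pi*(m:ℝ)*t) = Real.cos (2*(m:ℝ)*(Real.pi*t)) :=
      fun t => congrArg Real.cos (by ring)
    have hval : (2:ℝ)^(2*n+1) * (∫ t in (0:ℝ)..1,
          Real.sin (Real.pi * t) ^ (2*n+1) * Real.cos (2*Real.pi*(m:ℝ)*t))
        = (2 ^ (2 * n + 1) / Real.pi) *
          ∫ x in (0:ℝ)..Real.pi, Real.sin x ^ (2 * n + 1) * Real.cos (2 * m * x) := by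
      have hcomp : (∫ t in (0:ℝ)..1,
            Real.sin (Real.pi * t) ^ (2*n+1) * Real.cos (2*Real.pi*(m:ℝ)*t))
          = ∫ t in (0:ℝ)..1, Real.sin (Real.pi * t) ^ (2*n+1) * Real.cos (2*(m:ℝ)*(Real.pi * t)) := by
        apply intervalIntegral.integral_congr
        intro t _
        simp only [hcos]
      have hcm := intervalIntegral.integral_comp_mul_left (a := (0:ℝ)) (b := 1)
        (fun x => Real.sin x ^ (2*n+1) * Real.cos (2*(m:ℝ)*x)) Real.pi_ne_zero
      simp only [mul_zero, mul_one, smul_eq_mul] at hcm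
      rw [hcomp, hcm]
      ring
    rw [hfun, ← hval]
    exact h2
  · -- sign for m ≤ n
    intro hmn
    rw [h1]
    apply sign_helper
    have hP := prod_sign_le m n hmn
    have haux := pos_aux _ _ _ (n+1-m) hT hE hP
    have hpow : (-1:ℝ)^m * (-1)^(n+1) = (-1)^(n+1-m) := by
      rw [← pow_add, show m + (n+1) = (n+1-m) + 2*m from by omega, pow_add, pow_mul]
      norm_num
    have heq : (-1:ℝ)^m * ((2 ^ (2*n+1) / Real.pi) *
          (((-1 : ℝ) ^ (n + 1) * 2 ^ (n + 1) * (n.factorial : ℝ) * ((2 * n + 1).doubleFactorial : ℝ))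
            / (∏ k ∈ Finset.range (n + 1), (4 * (m : ℝ) ^ 2 - (2 * (k : ℝ) + 1) ^ 2))))
        = (-1:ℝ)^(n+1-m) * ((2 ^ (2*n+1) / Real.pi) *
          ((2^(n+1) * (n.factorial:ℝ) * ((2*n+1).doubleFactorial:ℝ))
            / (∏ k ∈ Finset.range (n + 1), (4 * (m : ℝ) ^ 2 - (2 * (k : ℝ) + 1) ^ 2)))) := by
      linear_combination ((2 ^ (2*n+1) / Real.pi) *
        ((2^(n+1) * (n.factorial:ℝ) * ((2*n+1).doubleFactorial:ℝ))
          / (∏ k ∈ Finset.range (n + 1), (4 * (m : ℝ) ^ 2 - (2 * (k : ℝ) + 1) ^ 2)))) * hpow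
    rw [heq]
    exact haux
  · -- sign for n < m
    intro hmn
    rw [h1]
    apply sign_helper
    have hP := prod_pos_gt m n hmn
    have hpow : (-1:ℝ)^(n+1) * (-1)^(n+1) = 1 := by
      rw [← mul_pow]; norm_num
    have heq : (-1:ℝ)^(n+1) * ((2 ^ (2*n+1) / Real.pi) *
          (((-1 : ℝ) ^ (n + 1) * 2 ^ (n + 1) * (n.factorial : ℝ) * ((2 * n + 1).doubleFactorial : ℝ))
            / (∏ k ∈ Finset.range (n + 1), (4 * (m : ℝ) ^ 2 - (2 * (k : ℝ) + 1) ^ 2))))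
        = (2 ^ (2*n+1) / Real.pi) *
          ((2^(n+1) * (n.factorial:ℝ) * ((2*n+1).doubleFactorial:ℝ))
            / (∏ k ∈ Finset.range (n + 1), (4 * (m : ℝ) ^ 2 - (2 * (k : ℝ) + 1) ^ 2))) := by
      linear_combination ((2 ^ (2*n+1) / Real.pi) *
        ((2^(n+1) * (n.factorial:ℝ) * ((2*n+1).doubleFactorial:ℝ))
          / (∏ k ∈ Finset.range (n + 1), (4 * (m : ℝ) ^ 2 - (2 * (k : ℝ) + 1) ^ 2)))) * hpow
    rw [heq]
    exact mul_pos hT (div_pos hE hP)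
  · -- the Mexican hat
    intro _
    constructor
    · intro h
      by_contra hm
      have hm1 : (1:ℝ) ≤ m := by exact_mod_cast Nat.one_le_iff_ne_zero.mpr hm
      have hden : (0:ℝ) < 4*(m:ℝ)^2 - 1 := by nlinarith
      have hpos : 0 < (2/Real.pi) * (2/(4*(m:ℝ)^2-1)) := by positivity
      rw [neg_mul] at h
      linarith
    · rintro rfl
      have hπ := Real.pi_pos
      norm_num
      positivity
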